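/- Assume that for every (t,ω) ∈ [0,T] × Ω there exists ω̂ ∈ 𝒜(t,ω) such that X_u(ω̂) < X_t(ω) for all u ∈ (t,T]. Then σ* is the unique perfect stopping time: σ* is perfect, and any stopping time τ with τ(ω) ≠ σ*(ω) for some ω ∈ Ω is not perfect (if τ(ω) < σ*(ω) then τ fails Pareto optimality with respect to 𝒜(τ(ω),ω), and if τ(ω) > σ*(ω) then τ fails optimality with respect to 𝒜(σ*(ω),ω)). -/

import Mathlib

open Set

noncomputable section

namespace SellingRegret

/-- Running maximum `X*_t(ω) = sup_{s ∈ [0,t]} X_s(ω)`, where `X_s(ω) = ω s`. -/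
def Mstar (ω : ℝ → ℝ) (t : ℝ) : ℝ :=
  sSup (ω '' Set.Icc 0 t)

/-- `𝒜(t,ω)`: the trajectories in `Ω` agreeing with `ω` on `[0,t]`. -/
def Hist (Ω : Set (ℝ → ℝ)) (t : ℝ) (ω : ℝ → ℝ) : Set (ℝ → ℝ) :=
  {ω' ∈ Ω | ∀ s ∈ Set.Icc 0 t, ω' s = ω s}

/-- A stopping time: a map `τ : Ω → [0,T]` such that whenever `τ(ω) ≤ t` and
`ω'` agrees with `ω` on `[0,t]`, one has `τ(ω') = τ(ω)`. -/
def IsStoppingTime (T : ℝ) (Ω : Set (ℝ → ℝ)) (τ : (ℝ → ℝ) → ℝ) : Prop :=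
  (∀ ω ∈ Ω, τ ω ∈ Set.Icc 0 T) ∧
  ∀ ω ∈ Ω, ∀ t ∈ Set.Icc 0 T, τ ω ≤ t →
    ∀ ω' ∈ Ω, (∀ s ∈ Set.Icc 0 t, ω' s = ω s) → τ ω' = τ ω

/-- Estimated regret `R(t,ω;τ,ω') = max{X*_{τ(ω')}(ω') − X_{τ(ω')}(ω'), ψ(τ(ω'),ω')}`
(it depends only on `τ` and `ω'`). -/
def regret (ψ : ℝ → (ℝ → ℝ) → ℝ) (τ : (ℝ → ℝ) → ℝ) (ω' : ℝ → ℝ) : ℝ :=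
  max (Mstar ω' (τ ω') - ω' (τ ω')) (ψ (τ ω') ω')

/-- Worst-case estimated regret `ℛ(t,ω;τ) = sup_{ω' ∈ 𝒜(t,ω)} R(t,ω;τ,ω')`,
valued in `[0,∞]`. -/
def worstRegret (Ω : Set (ℝ → ℝ)) (ψ : ℝ → (ℝ → ℝ) → ℝ)
    (t : ℝ) (ω : ℝ → ℝ) (τ : (ℝ → ℝ) → ℝ) : ENNReal :=
  ⨆ ω' ∈ Hist Ω t ω, ENNReal.ofReal (regret ψ τ ω')

/-- `σ*(ω) = inf {s ∈ [0,T] : X*_s(ω) − X_s(ω) ≥ ψ(s,ω)}`. -/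
def sigmaStar (T : ℝ) (ψ : ℝ → (ℝ → ℝ) → ℝ) (ω : ℝ → ℝ) : ℝ :=
  sInf {s ∈ Set.Icc 0 T | ψ s ω ≤ Mstar ω s - ω s}

/-- `τ ∈ 𝒯_t(ω)`: `τ(ω') ≥ t` for all `ω' ∈ 𝒜(t,ω)`. -/
def Admissible (Ω : Set (ℝ → ℝ)) (t : ℝ) (ω : ℝ → ℝ) (τ : (ℝ → ℝ) → ℝ) : Prop :=
  ∀ ω' ∈ Hist Ω t ω, t ≤ τ ω'

/-- `σ` is optimal with respect to `𝒜(t,ω)`. -/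
def OptimalAt (T : ℝ) (Ω : Set (ℝ → ℝ)) (ψ : ℝ → (ℝ → ℝ) → ℝ)
    (t : ℝ) (ω : ℝ → ℝ) (σ : (ℝ → ℝ) → ℝ) : Prop :=
  IsStoppingTime T Ω σ ∧ Admissible Ω t ω σ ∧
  ∀ τ, IsStoppingTime T Ω τ → Admissible Ω t ω τ →
    worstRegret Ω ψ t ω σ ≤ worstRegret Ω ψ t ω τ

/-- `σ` is Pareto optimal with respect to `𝒜(t,ω)`. -/
def ParetoOptimalAt (T : ℝ) (Ω : Set (ℝ → ℝ)) (ψ : ℝ → (ℝ → ℝ) → ℝ)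
    (t : ℝ) (ω : ℝ → ℝ) (σ : (ℝ → ℝ) → ℝ) : Prop :=
  IsStoppingTime T Ω σ ∧ Admissible Ω t ω σ ∧
  ¬ ∃ τ, IsStoppingTime T Ω τ ∧ Admissible Ω t ω τ ∧
      (∀ ω' ∈ Hist Ω t ω, regret ψ τ ω' ≤ regret ψ σ ω') ∧
      ∃ ω'' ∈ Hist Ω t ω, regret ψ τ ω'' < regret ψ σ ω''

/-- `σ` is perfect: optimal and Pareto optimal with respect to `𝒜(t,ω)`
whenever it is admissible for `𝒜(t,ω)`. -/
def Perfect (T : ℝ) (Ω : Set (ℝ → ℝ)) (ψ : ℝ → (ℝ → ℝ) → ℝ)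
    (σ : (ℝ → ℝ) → ℝ) : Prop :=
  IsStoppingTime T Ω σ ∧
  ∀ t ∈ Set.Icc 0 T, ∀ ω ∈ Ω, Admissible Ω t ω σ →
    OptimalAt T Ω ψ t ω σ ∧ ParetoOptimalAt T Ω ψ t ω σ

/-- Conditions (A) and (B) of Theorem 2 for a stopping time `σ`. -/
def CondAB (T : ℝ) (Ω : Set (ℝ → ℝ)) (ψ : ℝ → (ℝ → ℝ) → ℝ)
    (σ : (ℝ → ℝ) → ℝ) : Prop :=
  ∀ τ, IsStoppingTime T Ω τ → ∀ ω ∈ Ω,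
    (σ ω < τ ω → ∃ ω' ∈ Hist Ω (σ ω) ω, regret ψ σ ω' < regret ψ τ ω') ∧
    (τ ω < σ ω → ∀ ω' ∈ Hist Ω (τ ω) ω, regret ψ σ ω' < regret ψ τ ω')

/-- `Ω = C([0,T],ℝ)`: all trajectories continuous on `[0,T]`. -/
def OmegaC (T : ℝ) : Set (ℝ → ℝ) :=
  {ω | ContinuousOn ω (Set.Icc 0 T)}

/-- The two-sided Lipschitz corridor of Example 2:
`−L₁(t−s) ≤ ω(t) − ω(s) ≤ L₂(t−s)` for `0 ≤ s ≤ t ≤ T`. -/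
def OmegaL (T L₁ L₂ : ℝ) : Set (ℝ → ℝ) :=
  {ω | ∀ s t : ℝ, 0 ≤ s → s ≤ t → t ≤ T →
    -L₁ * (t - s) ≤ ω t - ω s ∧ ω t - ω s ≤ L₂ * (t - s)}


section AuxLemmas

variable {T : ℝ} {Ω : Set (ℝ → ℝ)} {ψ : ℝ → (ℝ → ℝ) → ℝ} {ω ω' ω'' : ℝ → ℝ}
  {τ : (ℝ → ℝ) → ℝ}

set_option linter.unusedSectionVars false
set_option linter.unusedVariables false

lemma mstar_bddAbove (hω : ContinuousOn ω (Icc 0 T)) {t : ℝ} (ht : t ∈ Icc 0 T) :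
    BddAbove (ω '' Icc 0 t) :=
  (isCompact_Icc.image_of_continuousOn
    (hω.mono (Icc_subset_Icc le_rfl ht.2))).bddAbove

lemma le_mstar (hω : ContinuousOn ω (Icc 0 T)) {t : ℝ} (ht : t ∈ Icc 0 T)
    {s : ℝ} (hs : s ∈ Icc 0 t) : ω s ≤ Mstar ω t :=
  le_csSup (mstar_bddAbove hω ht) (mem_image_of_mem ω hs)

lemma mstar_mono (hω : ContinuousOn ω (Icc 0 T)) {s t : ℝ} (h0 : 0 ≤ s)
    (hst : s ≤ t) (htT : t ≤ T) : Mstar ω s ≤ Mstar ω t :=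
  csSup_le_csSup (mstar_bddAbove hω ⟨h0.trans hst, htT⟩)
    ((nonempty_Icc.mpr h0).image ω)
    (image_mono (f := ω) (Icc_subset_Icc le_rfl hst))

lemma mstar_agree {t s : ℝ} (h : ∀ u ∈ Icc 0 t, ω' u = ω u)
    (hst : s ≤ t) : Mstar ω' s = Mstar ω s := by
  unfold Mstar
  congr 1
  exact image_congr fun u hu => h u ⟨hu.1, hu.2.trans hst⟩

lemma mstar_exists_max (hω : ContinuousOn ω (Icc 0 T)) {t : ℝ} (ht : t ∈ Icc 0 T) :
    ∃ p ∈ Icc 0 t, Mstar ω t = ω p := by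
  obtain ⟨p, hp, hmax⟩ := isCompact_Icc.exists_isMaxOn (nonempty_Icc.mpr ht.1)
    (hω.mono (Icc_subset_Icc le_rfl ht.2))
  refine ⟨p, hp, le_antisymm (csSup_le ((nonempty_Icc.mpr ht.1).image ω) ?_)
    (le_mstar hω ht hp)⟩
  rintro y ⟨u, hu, rfl⟩
  exact hmax hu

lemma mstar_right (hω : ContinuousOn ω (Icc 0 T)) {s : ℝ} (hs : s ∈ Icc 0 T)
    {ε : ℝ} (hε : 0 < ε) :
    ∃ δ > 0, ∀ t ∈ Icc 0 T, s ≤ t → t < s + δ → Mstar ω t ≤ Mstar ω s + ε := by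
  obtain ⟨δ, hδ, h⟩ := Metric.continuousWithinAt_iff.mp (hω s hs) ε hε
  refine ⟨δ, hδ, fun t ht hst htδ => ?_⟩
  apply csSup_le ((nonempty_Icc.mpr (hs.1.trans hst)).image ω)
  rintro y ⟨u, hu, rfl⟩
  rcases le_or_gt u s with h1 | h1
  · exact (le_mstar hω hs ⟨hu.1, h1⟩).trans (le_add_of_nonneg_right hε.le)
  · have hu' : u ∈ Icc 0 T := ⟨hu.1, hu.2.trans ht.2⟩
    have hd : dist u s < δ := by
      rw [Real.dist_eq, abs_of_nonneg (by linarith)]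
      linarith [hu.2]
    have := h hu' hd
    rw [Real.dist_eq] at this
    have h2 := (abs_lt.mp this).2
    have h3 : ω s ≤ Mstar ω s := le_mstar hω hs ⟨hs.1, le_rfl⟩
    linarith


/-- The trigger set whose infimum is `σ*`. -/
def SSet (T : ℝ) (ψ : ℝ → (ℝ → ℝ) → ℝ) (ω : ℝ → ℝ) : Set ℝ :=
  {s ∈ Set.Icc 0 T | ψ s ω ≤ Mstar ω s - ω s}

lemma sigmaStar_eq : sigmaStar T ψ ω = sInf (SSet T ψ ω) := rfl

lemma sset_bddBelow : BddBelow (SSet T ψ ω) := ⟨0, fun _ hx => hx.1.1⟩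

lemma sset_T_mem (hT : 0 ≤ T) (hω : ContinuousOn ω (Icc 0 T))
    (hψT : ψ T ω = 0) : T ∈ SSet T ψ ω := by
  refine ⟨⟨hT, le_rfl⟩, ?_⟩
  rw [hψT]
  have := le_mstar hω (t := T) ⟨hT, le_rfl⟩ (s := T) ⟨hT, le_rfl⟩
  linarith

lemma sigmaStar_mem_Icc (hT : 0 ≤ T) (hω : ContinuousOn ω (Icc 0 T))
    (hψT : ψ T ω = 0) : sigmaStar T ψ ω ∈ Icc 0 T := by
  constructor
  · exact le_csInf ⟨T, sset_T_mem hT hω hψT⟩ fun x hx => hx.1.1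
  · exact csInf_le sset_bddBelow (sset_T_mem hT hω hψT)

lemma not_mem_lt_sigmaStar {s : ℝ} (hs : s ∈ Icc 0 T) (hlt : s < sigmaStar T ψ ω) :
    Mstar ω s - ω s < ψ s ω := by
  by_contra h
  push_neg at h
  exact absurd (csInf_le sset_bddBelow (⟨hs, h⟩ : s ∈ SSet T ψ ω)) (not_le.mpr hlt)

/-- The infimum defining `σ*` is attained. -/
lemma sigmaStar_mem (hT : 0 ≤ T) (hω : ContinuousOn ω (Icc 0 T))
    (hψT : ψ T ω = 0)
    (hψc : ContinuousOn (fun t => ψ t ω) (Icc 0 T)) :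
    ψ (sigmaStar T ψ ω) ω ≤ Mstar ω (sigmaStar T ψ ω) - ω (sigmaStar T ψ ω) := by
  set σ := sigmaStar T ψ ω with hσ
  have hσI : σ ∈ Icc 0 T := sigmaStar_mem_Icc hT hω hψT
  by_contra hc
  push_neg at hc
  set c := ψ σ ω - (Mstar ω σ - ω σ) with hcdef
  have hcpos : 0 < c := by simp [hcdef]; linarith
  obtain ⟨δ1, hδ1, hM⟩ := mstar_right hω hσI (ε := c / 4) (by linarith)
  obtain ⟨δ2, hδ2, hωc⟩ := Metric.continuousWithinAt_iff.mp (hω σ hσI) (c / 4) (by linarith)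
  obtain ⟨δ3, hδ3, hψc'⟩ := Metric.continuousWithinAt_iff.mp (hψc σ hσI) (c / 4) (by linarith)
  set δ := min δ1 (min δ2 δ3) with hδdef
  have hδpos : 0 < δ := lt_min hδ1 (lt_min hδ2 hδ3)
  have hlt : σ < σ + δ := by linarith
  obtain ⟨s, hsS, hsδ⟩ := exists_lt_of_csInf_lt ⟨T, sset_T_mem hT hω hψT⟩ hlt
  have hσs : σ ≤ s := csInf_le sset_bddBelow hsS
  have hsI : s ∈ Icc 0 T := hsS.1
  have hdist : dist s σ < δ := by
    rw [Real.dist_eq, abs_of_nonneg (by linarith)]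
    linarith
  have hd1 : δ ≤ δ1 := min_le_left _ _
  have hd2 : δ ≤ δ2 := (min_le_right _ _).trans (min_le_left _ _)
  have hd3 : δ ≤ δ3 := (min_le_right _ _).trans (min_le_right _ _)
  have h1 : Mstar ω s ≤ Mstar ω σ + c / 4 := hM s hsI hσs (by linarith)
  have h2 : |ω s - ω σ| < c / 4 := by
    have := hωc hsI (by linarith)
    rwa [Real.dist_eq] at this
  have h3 : |ψ s ω - ψ σ ω| < c / 4 := by
    have := hψc' hsI (by linarith)
    rwa [Real.dist_eq] at this
  have h2' := (abs_lt.mp h2).1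
  have h3' := (abs_lt.mp h3).1
  have hsmem : ψ s ω ≤ Mstar ω s - ω s := hsS.2
  have : Mstar ω σ - ω σ < ψ σ ω := by linarith
  linarith


/-- At a first-crossing time `s* > 0` the two sides actually meet. -/
lemma boundary (hω : ContinuousOn ω (Icc 0 T))
    (hψc : ContinuousOn (fun t => ψ t ω) (Icc 0 T))
    {s' : ℝ} (h0 : 0 < s') (hsT : s' ≤ T) (hψ0 : 0 ≤ ψ s' ω)
    (hlt : ∀ s, 0 ≤ s → s < s' → Mstar ω s - ω s < ψ s ω) :
    Mstar ω s' - ω s' ≤ ψ s' ω := by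
  by_contra hcon
  push_neg at hcon
  set c := (Mstar ω s' - ω s') - ψ s' ω with hcdef
  have hcpos : 0 < c := by simp [hcdef]; linarith
  have hs'I : s' ∈ Icc 0 T := ⟨h0.le, hsT⟩
  obtain ⟨p, hp, hpmax⟩ := mstar_exists_max hω hs'I
  have hps' : p < s' := by
    rcases lt_or_eq_of_le hp.2 with h | h
    · exact h
    · exfalso; rw [h] at hpmax; simp [hcdef, hpmax] at hcpos; linarith
  obtain ⟨δ2, hδ2, hωc⟩ := Metric.continuousWithinAt_iff.mp (hω s' hs'I) (c / 4) (by linarith)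
  obtain ⟨δ3, hδ3, hψc'⟩ := Metric.continuousWithinAt_iff.mp (hψc s' hs'I) (c / 4) (by linarith)
  set δ := min δ2 δ3 with hδdef
  have hδpos : 0 < δ := lt_min hδ2 hδ3
  have hd2 : δ ≤ δ2 := min_le_left _ _
  have hd3 : δ ≤ δ3 := min_le_right _ _
  set s := max p (s' - δ / 2) with hsdef
  have hss' : s < s' := max_lt hps' (by linarith)
  have hs0 : 0 ≤ s := hp.1.trans (le_max_left _ _)
  have hsI : s ∈ Icc 0 T := ⟨hs0, hss'.le.trans hsT⟩
  have hsd : s' - δ / 2 ≤ s := le_max_right _ _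
  have hdist : dist s s' < δ := by
    rw [Real.dist_eq, abs_of_nonpos (by linarith)]
    linarith
  have h2 : |ω s - ω s'| < c / 4 := by
    have := hωc hsI (by linarith)
    rwa [Real.dist_eq] at this
  have h3 : |ψ s ω - ψ s' ω| < c / 4 := by
    have := hψc' hsI (by linarith)
    rwa [Real.dist_eq] at this
  have hMs : ω p ≤ Mstar ω s :=
    le_mstar hω hsI ⟨hp.1, le_max_left _ _⟩
  have hmain := hlt s hs0 hss'
  have h2' := (abs_lt.mp h2).2
  have h3' := (abs_lt.mp h3).2
  -- Mstar ω s' = ω p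
  linarith [hpmax.ge, hpmax.le]

/- Hist lemmas -/
lemma hist_self (hω : ω ∈ Ω) {t : ℝ} : ω ∈ Hist Ω t ω := ⟨hω, fun _ _ => rfl⟩

lemma hist_mono {s t : ℝ} (hst : s ≤ t) : Hist Ω t ω ⊆ Hist Ω s ω :=
  fun _ h => ⟨h.1, fun u hu => h.2 u ⟨hu.1, hu.2.trans hst⟩⟩

lemma hist_trans {t s : ℝ} (hts : t ≤ s) (h1 : ω' ∈ Hist Ω t ω)
    (h2 : ω'' ∈ Hist Ω s ω') : ω'' ∈ Hist Ω t ω :=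
  ⟨h2.1, fun u hu => (h2.2 u ⟨hu.1, hu.2.trans hts⟩).trans (h1.2 u hu)⟩

lemma hist_mem_Omega (h : ω' ∈ Hist Ω t ω) : ω' ∈ Ω := h.1

/- Locality of the trigger set -/
lemma sset_congr
    (hψh : ∀ t ∈ Set.Icc 0 T, ∀ ω ∈ Ω, ∀ ω' ∈ Hist Ω t ω, ψ t ω' = ψ t ω)
    (hΩω : ω ∈ Ω) {t : ℝ} (ht : t ∈ Icc 0 T) (h : ω' ∈ Hist Ω t ω)
    {s : ℝ} (hs : s ∈ Icc 0 t) :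
    (s ∈ SSet T ψ ω' ↔ s ∈ SSet T ψ ω) := by
  have hsI : s ∈ Icc 0 T := ⟨hs.1, hs.2.trans ht.2⟩
  have hψ : ψ s ω' = ψ s ω := hψh s hsI ω hΩω ω' (hist_mono hs.2 h)
  have hM : Mstar ω' s = Mstar ω s := mstar_agree h.2 hs.2
  have hval : ω' s = ω s := h.2 s hs
  unfold SSet
  rw [mem_setOf_eq, mem_setOf_eq, hψ, hM, hval]


section Hyps

variable (hT : 0 ≤ T) (hΩ : ∀ ω ∈ Ω, ContinuousOn ω (Set.Icc 0 T))
  (hψT : ∀ ω ∈ Ω, ψ T ω = 0)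
  (hψnn : ∀ ω ∈ Ω, ∀ t ∈ Set.Icc 0 T, 0 ≤ ψ t ω)
  (hψc : ∀ ω ∈ Ω, ContinuousOn (fun t => ψ t ω) (Set.Icc 0 T))
  (hψa : ∀ ω ∈ Ω, StrictAntiOn (fun t => ψ t ω) (Set.Icc 0 T))
  (hψh : ∀ t ∈ Set.Icc 0 T, ∀ ω ∈ Ω, ∀ ω' ∈ Hist Ω t ω, ψ t ω' = ψ t ω)
  (hreach : ∀ t ∈ Set.Icc 0 T, ∀ ω ∈ Ω,
      ∃ ωh ∈ Hist Ω t ω, ∀ u, t < u → u ≤ T → ωh u < ω t)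

include hT hΩ hψT hψnn hψc hψa hψh hreach

lemma sigmaStar_sset (hΩω : ω ∈ Ω) : sigmaStar T ψ ω ∈ SSet T ψ ω :=
  ⟨sigmaStar_mem_Icc hT (hΩ ω hΩω) (hψT ω hΩω),
   sigmaStar_mem hT (hΩ ω hΩω) (hψT ω hΩω) (hψc ω hΩω)⟩

/-- If `σ*(ω) ≤ t`, then `σ*` is constant on `𝒜(t,ω)`. -/
lemma sigmaStar_local_le (hΩω : ω ∈ Ω) {t : ℝ} (ht : t ∈ Icc 0 T)
    (h : ω' ∈ Hist Ω t ω) (hle : sigmaStar T ψ ω ≤ t) :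
    sigmaStar T ψ ω' = sigmaStar T ψ ω := by
  have hσω := sigmaStar_sset hT hΩ hψT hψnn hψc hψa hψh hreach hΩω
  have hσI := sigmaStar_mem_Icc (ψ := ψ) hT (hΩ ω hΩω) (hψT ω hΩω)
  have hmem' : sigmaStar T ψ ω ∈ SSet T ψ ω' :=
    (sset_congr hψh hΩω ht h ⟨hσI.1, hle⟩).mpr hσω
  have h1 : sigmaStar T ψ ω' ≤ sigmaStar T ψ ω := csInf_le sset_bddBelow hmem'
  rcases lt_or_eq_of_le h1 with hlt | heq
  · exfalso
    have hσ'S := sigmaStar_sset hT hΩ hψT hψnn hψc hψa hψh hreach h.1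
    have hσ'I := sigmaStar_mem_Icc (ψ := ψ) hT (hΩ ω' h.1) (hψT ω' h.1)
    have : sigmaStar T ψ ω' ∈ SSet T ψ ω :=
      (sset_congr hψh hΩω ht h ⟨hσ'I.1, (hlt.le.trans hle)⟩).mp hσ'S
    exact absurd (csInf_le sset_bddBelow this) (not_le.mpr hlt)
  · exact heq

/-- If `t < σ*(ω)`, then `t < σ*(ω')` on `𝒜(t,ω)`. -/
lemma sigmaStar_local_gt (hΩω : ω ∈ Ω) {t : ℝ} (ht : t ∈ Icc 0 T)
    (h : ω' ∈ Hist Ω t ω) (hgt : t < sigmaStar T ψ ω) :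
    t < sigmaStar T ψ ω' := by
  by_contra hc
  push_neg at hc
  have hσ'S := sigmaStar_sset hT hΩ hψT hψnn hψc hψa hψh hreach h.1
  have hσ'I := sigmaStar_mem_Icc (ψ := ψ) hT (hΩ ω' h.1) (hψT ω' h.1)
  have : sigmaStar T ψ ω' ∈ SSet T ψ ω :=
    (sset_congr hψh hΩω ht h ⟨hσ'I.1, hc⟩).mp hσ'S
  exact absurd (csInf_le sset_bddBelow this) (not_le.mpr (lt_of_le_of_lt hc hgt))

lemma sigmaStar_stopping : IsStoppingTime T Ω (sigmaStar T ψ) := by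
  refine ⟨fun ω hω => sigmaStar_mem_Icc hT (hΩ ω hω) (hψT ω hω), ?_⟩
  intro ω hω t ht hle ω' hω' hagree
  exact sigmaStar_local_le hT hΩ hψT hψnn hψc hψa hψh hreach hω ht ⟨hω', hagree⟩ hle

/-- `regret` of `σ*` is the drawdown at `σ*`. -/
lemma regret_sigmaStar (hΩω : ω ∈ Ω) :
    regret ψ (sigmaStar T ψ) ω = Mstar ω (sigmaStar T ψ ω) - ω (sigmaStar T ψ ω) :=
  max_eq_left (sigmaStar_mem hT (hΩ ω hΩω) (hψT ω hΩω) (hψc ω hΩω))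

/-- If `σ*(ω) > 0`, `regret` of `σ*` equals `ψ` at `σ*`. -/
lemma regret_sigmaStar_psi (hΩω : ω ∈ Ω) (h0 : 0 < sigmaStar T ψ ω) :
    regret ψ (sigmaStar T ψ) ω = ψ (sigmaStar T ψ ω) ω := by
  have hσI := sigmaStar_mem_Icc (ψ := ψ) hT (hΩ ω hΩω) (hψT ω hΩω)
  have hψ0 : 0 ≤ ψ (sigmaStar T ψ ω) ω := hψnn ω hΩω _ hσI
  have hub : Mstar ω (sigmaStar T ψ ω) - ω (sigmaStar T ψ ω) ≤ ψ (sigmaStar T ψ ω) ω := by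
    apply boundary (hΩ ω hΩω) (hψc ω hΩω) h0 hσI.2 hψ0
    intro s hs0 hslt
    exact not_mem_lt_sigmaStar ⟨hs0, hslt.le.trans hσI.2⟩ hslt
  exact max_eq_right hub


/-- If `τ` stops strictly before `σ*` on `ω'`, its regret there is at least that of `σ*`. -/
lemma regret_le_of_stop_early (hτ : IsStoppingTime T Ω τ) (hΩω' : ω' ∈ Ω)
    (hlt : τ ω' < sigmaStar T ψ ω') :
    regret ψ (sigmaStar T ψ) ω' ≤ regret ψ τ ω' := by
  have huI : τ ω' ∈ Icc 0 T := hτ.1 ω' hΩω'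
  have hσI : sigmaStar T ψ ω' ∈ Icc 0 T := sigmaStar_mem_Icc hT (hΩ ω' hΩω') (hψT ω' hΩω')
  have h0 : 0 < sigmaStar T ψ ω' := lt_of_le_of_lt huI.1 hlt
  have hmax : regret ψ τ ω' = ψ (τ ω') ω' :=
    max_eq_right (not_mem_lt_sigmaStar huI hlt).le
  rw [hmax, regret_sigmaStar_psi hT hΩ hψT hψnn hψc hψa hψh hreach hΩω' h0]
  exact (hψa ω' hΩω' huI hσI hlt).le

/-- Using the reaching assumption, any `τ` stopping at or after `σ*(ω')` is (weakly,
and strictly if strictly after) beaten on some continuation of `ω'` beyond `σ*(ω')`. -/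
lemma exists_worse (hτ : IsStoppingTime T Ω τ) (hΩω' : ω' ∈ Ω)
    (hge : sigmaStar T ψ ω' ≤ τ ω') :
    ∃ ωh ∈ Hist Ω (sigmaStar T ψ ω') ω',
      regret ψ (sigmaStar T ψ) ω' ≤ regret ψ τ ωh ∧
      (sigmaStar T ψ ω' < τ ω' → regret ψ (sigmaStar T ψ) ω' < regret ψ τ ωh) := by
  set s' := sigmaStar T ψ ω' with hs'def
  have hs'I : s' ∈ Icc 0 T := sigmaStar_mem_Icc hT (hΩ ω' hΩω') (hψT ω' hΩω')
  obtain ⟨ωh, hωh, hdrop⟩ := hreach s' hs'I ω' hΩω'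
  have hregσ : regret ψ (sigmaStar T ψ) ω' = Mstar ω' s' - ω' s' :=
    regret_sigmaStar hT hΩ hψT hψnn hψc hψa hψh hreach hΩω'
  have hMagree : Mstar ωh s' = Mstar ω' s' := mstar_agree hωh.2 le_rfl
  have hvagree : ωh s' = ω' s' := hωh.2 s' ⟨hs'I.1, le_rfl⟩
  rcases eq_or_lt_of_le hge with heq | hstrict
  · -- τ stops exactly at s' on ω', hence also on ωh
    have hτωh : τ ωh = s' := by
      have := hτ.2 ω' hΩω' s' hs'I heq.symm.le ωh hωh.1 hωh.2
      rw [this, ← heq]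
    refine ⟨ωh, hωh, ?_, fun hc => absurd heq (by linarith)⟩
    rw [hregσ]
    calc Mstar ω' s' - ω' s' = Mstar ωh (τ ωh) - ωh (τ ωh) := by
          rw [hτωh, hMagree, hvagree]
      _ ≤ regret ψ τ ωh := le_max_left _ _
  · -- τ stops strictly after s' on ω', hence also on ωh
    have hτωh : s' < τ ωh := by
      by_contra hc
      push_neg at hc
      have := hτ.2 ωh hωh.1 s' hs'I hc ω' hΩω' (fun s hs => (hωh.2 s hs).symm)
      rw [this] at hstrict
      exact absurd hc (not_le.mpr hstrict)
    have huI : τ ωh ∈ Icc 0 T := hτ.1 ωh hωh.1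
    have hkey : Mstar ω' s' - ω' s' < regret ψ τ ωh := by
      have h1 : Mstar ωh s' ≤ Mstar ωh (τ ωh) :=
        mstar_mono (hΩ ωh hωh.1) hs'I.1 hτωh.le huI.2
      have h2 : ωh (τ ωh) < ω' s' := hdrop (τ ωh) hτωh huI.2
      have h3 : Mstar ωh (τ ωh) - ωh (τ ωh) ≤ regret ψ τ ωh := le_max_left _ _
      rw [← hMagree]
      linarith
    exact ⟨ωh, hωh, by rw [hregσ]; exact hkey.le, fun _ => by rw [hregσ]; exact hkey⟩

lemma sigmaStar_optimalAt {t : ℝ} (ht : t ∈ Icc 0 T) (hΩω : ω ∈ Ω)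
    (hadm : Admissible Ω t ω (sigmaStar T ψ)) :
    OptimalAt T Ω ψ t ω (sigmaStar T ψ) := by
  refine ⟨sigmaStar_stopping hT hΩ hψT hψnn hψc hψa hψh hreach, hadm, fun τ hτ hτadm => ?_⟩
  apply iSup₂_le
  intro ω' hω'
  rcases lt_or_ge (τ ω') (sigmaStar T ψ ω') with h | h
  · exact le_iSup₂_of_le ω' hω' (ENNReal.ofReal_le_ofReal
      (regret_le_of_stop_early hT hΩ hψT hψnn hψc hψa hψh hreach hτ hω'.1 h))
  · obtain ⟨ωh, hωh, hle, -⟩ :=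
      exists_worse hT hΩ hψT hψnn hψc hψa hψh hreach hτ hω'.1 h
    exact le_iSup₂_of_le ωh (hist_trans (hadm ω' hω') hω' hωh)
      (ENNReal.ofReal_le_ofReal hle)

lemma sigmaStar_paretoAt {t : ℝ} (ht : t ∈ Icc 0 T) (hΩω : ω ∈ Ω)
    (hadm : Admissible Ω t ω (sigmaStar T ψ)) :
    ParetoOptimalAt T Ω ψ t ω (sigmaStar T ψ) := by
  refine ⟨sigmaStar_stopping hT hΩ hψT hψnn hψc hψa hψh hreach, hadm, ?_⟩
  rintro ⟨τ, hτ, hτadm, hle, ω'', hω'', hltr⟩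
  rcases lt_trichotomy (τ ω'') (sigmaStar T ψ ω'') with h | h | h
  · exact absurd hltr (not_lt.mpr
      (regret_le_of_stop_early hT hΩ hψT hψnn hψc hψa hψh hreach hτ hω''.1 h))
  · have : regret ψ τ ω'' = regret ψ (sigmaStar T ψ) ω'' := by
      unfold regret; rw [h]
    rw [this] at hltr
    exact lt_irrefl _ hltr
  · obtain ⟨ωh, hωh, -, hstrict⟩ :=
      exists_worse hT hΩ hψT hψnn hψc hψa hψh hreach hτ hω''.1 h.le
    have h2 := hstrict h
    have hs'I : sigmaStar T ψ ω'' ∈ Icc 0 T := sigmaStar_mem_Icc hT (hΩ ω'' hω''.1) (hψT ω'' hω''.1)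
    have hσωh : sigmaStar T ψ ωh = sigmaStar T ψ ω'' :=
      sigmaStar_local_le hT hΩ hψT hψnn hψc hψa hψh hreach hω''.1 hs'I hωh le_rfl
    have hregeq : regret ψ (sigmaStar T ψ) ωh = regret ψ (sigmaStar T ψ) ω'' := by
      rw [regret_sigmaStar hT hΩ hψT hψnn hψc hψa hψh hreach hωh.1, regret_sigmaStar hT hΩ hψT hψnn hψc hψa hψh hreach hω''.1,
        hσωh, mstar_agree hωh.2 le_rfl, hωh.2 _ ⟨hs'I.1, le_rfl⟩]
    have h3 := hle ωh (hist_trans (hadm ω'' hω'') hω'' hωh)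
    rw [hregeq] at h3
    exact absurd h2 (not_lt.mpr h3)

/-- Part (a): a stopping time stopping strictly before `σ*` at `ω` is not Pareto
optimal at `(τ(ω), ω)`. -/
lemma not_pareto_of_early (hτ : IsStoppingTime T Ω τ) (hΩω : ω ∈ Ω)
    (h : τ ω < sigmaStar T ψ ω) : ¬ ParetoOptimalAt T Ω ψ (τ ω) ω τ := by
  rintro ⟨-, hτadm, hno⟩
  apply hno
  set t := τ ω with htdef
  have ht : t ∈ Icc 0 T := hτ.1 ω hΩω
  have hB : ∀ ω'' ∈ Hist Ω t ω, regret ψ (sigmaStar T ψ) ω'' < regret ψ τ ω'' := by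
    intro ω'' hω''
    have hτω'' : τ ω'' = t := hτ.2 ω hΩω t ht le_rfl ω'' hω''.1 hω''.2
    have hgt : t < sigmaStar T ψ ω'' :=
      sigmaStar_local_gt hT hΩ hψT hψnn hψc hψa hψh hreach hΩω ht hω'' h
    have hσI : sigmaStar T ψ ω'' ∈ Icc 0 T := sigmaStar_mem_Icc hT (hΩ ω'' hω''.1) (hψT ω'' hω''.1)
    have hregτ : regret ψ τ ω'' = ψ t ω'' := by
      unfold regret
      rw [hτω'']
      exact max_eq_right (not_mem_lt_sigmaStar ht hgt).le
    rw [hregτ, regret_sigmaStar_psi hT hΩ hψT hψnn hψc hψa hψh hreach hω''.1 (lt_of_le_of_lt ht.1 hgt)]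
    exact hψa ω'' hω''.1 ht hσI hgt
  refine ⟨sigmaStar T ψ, sigmaStar_stopping hT hΩ hψT hψnn hψc hψa hψh hreach, ?_, ?_, ω, hist_self hΩω, ?_⟩
  · exact fun ω'' hω'' => (sigmaStar_local_gt hT hΩ hψT hψnn hψc hψa hψh hreach hΩω ht hω'' h).le
  · exact fun ω'' hω'' => (hB ω'' hω'').le
  · exact hB ω (hist_self hΩω)

/-- Part (b): a stopping time stopping strictly after `σ*` at `ω` is not optimal
at `(σ*(ω), ω)`. -/
lemma not_optimal_of_late (hτ : IsStoppingTime T Ω τ) (hΩω : ω ∈ Ω)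
    (h : sigmaStar T ψ ω < τ ω) : ¬ OptimalAt T Ω ψ (sigmaStar T ψ ω) ω τ := by
  rintro ⟨-, hτadm, hopt⟩
  set t := sigmaStar T ψ ω with htdef
  have ht : t ∈ Icc 0 T := sigmaStar_mem_Icc hT (hΩ ω hΩω) (hψT ω hΩω)
  have hσadm : Admissible Ω t ω (sigmaStar T ψ) := fun ω' hω' =>
    (sigmaStar_local_le hT hΩ hψT hψnn hψc hψa hψh hreach hΩω ht hω' le_rfl).ge
  have hkey := hopt (sigmaStar T ψ) (sigmaStar_stopping hT hΩ hψT hψnn hψc hψa hψh hreach) hσadm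
  set c := Mstar ω t - ω t with hcdef
  have hc0 : 0 ≤ c := by
    have := le_mstar (hΩ ω hΩω) ht (s := t) ⟨ht.1, le_rfl⟩
    linarith
  have hub : worstRegret Ω ψ t ω (sigmaStar T ψ) ≤ ENNReal.ofReal c := by
    apply iSup₂_le
    intro ω' hω'
    apply ENNReal.ofReal_le_ofReal
    have hσω' : sigmaStar T ψ ω' = t :=
      sigmaStar_local_le hT hΩ hψT hψnn hψc hψa hψh hreach hΩω ht hω' le_rfl
    rw [regret_sigmaStar hT hΩ hψT hψnn hψc hψa hψh hreach hω'.1, hσω', mstar_agree hω'.2 le_rfl,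
      hω'.2 t ⟨ht.1, le_rfl⟩]
  obtain ⟨ωh, hωh, hdrop⟩ := hreach t ht ω hΩω
  have hτωh : t < τ ωh := by
    by_contra hc
    push_neg at hc
    have := hτ.2 ωh hωh.1 t ht hc ω hΩω (fun s hs => (hωh.2 s hs).symm)
    rw [this] at h
    exact absurd hc (not_le.mpr h)
  have huI : τ ωh ∈ Icc 0 T := hτ.1 ωh hωh.1
  have hgt : c < regret ψ τ ωh := by
    have h1 : Mstar ωh t ≤ Mstar ωh (τ ωh) :=
      mstar_mono (hΩ ωh hωh.1) ht.1 hτωh.le huI.2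
    have h2 : ωh (τ ωh) < ω t := hdrop (τ ωh) hτωh huI.2
    have h3 : Mstar ωh (τ ωh) - ωh (τ ωh) ≤ regret ψ τ ωh := le_max_left _ _
    have h4 : Mstar ωh t = Mstar ω t := mstar_agree hωh.2 le_rfl
    simp only [hcdef]
    linarith
  have hlb : ENNReal.ofReal (regret ψ τ ωh) ≤ worstRegret Ω ψ t ω τ :=
    le_iSup₂_of_le ωh hωh le_rfl
  have : ENNReal.ofReal (regret ψ τ ωh) < ENNReal.ofReal (regret ψ τ ωh) :=
    lt_of_le_of_lt (hlb.trans (hkey.trans hub))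
      ((ENNReal.ofReal_lt_ofReal_iff (lt_of_le_of_lt hc0 hgt)).mpr hgt)
  exact lt_irrefl _ this

end Hyps

/-- Theorem 1: under the reaching assumption, `σ*` is the unique
perfect stopping time: `σ*` is perfect, and any stopping time `τ` with
`τ(ω) ≠ σ*(ω)` for some `ω ∈ Ω` is not perfect (if `τ(ω) < σ*(ω)` then `τ`
fails Pareto optimality with respect to `𝒜(τ(ω),ω)`, and if `τ(ω) > σ*(ω)`
then `τ` fails optimality with respect to `𝒜(σ*(ω),ω)`). -/
theorem stmt8 (T : ℝ) (hT : 0 < T) (Ω : Set (ℝ → ℝ))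
    (hΩ : ∀ ω ∈ Ω, ContinuousOn ω (Set.Icc 0 T))
    (ψ : ℝ → (ℝ → ℝ) → ℝ)
    (hψT : ∀ ω ∈ Ω, ψ T ω = 0)
    (hψnn : ∀ ω ∈ Ω, ∀ t ∈ Set.Icc 0 T, 0 ≤ ψ t ω)
    (hψc : ∀ ω ∈ Ω, ContinuousOn (fun t => ψ t ω) (Set.Icc 0 T))
    (hψa : ∀ ω ∈ Ω, StrictAntiOn (fun t => ψ t ω) (Set.Icc 0 T))
    (hψh : ∀ t ∈ Set.Icc 0 T, ∀ ω ∈ Ω, ∀ ω' ∈ Hist Ω t ω, ψ t ω' = ψ t ω)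
    (hreach : ∀ t ∈ Set.Icc 0 T, ∀ ω ∈ Ω,
      ∃ ωh ∈ Hist Ω t ω, ∀ u, t < u → u ≤ T → ωh u < ω t) :
    Perfect T Ω ψ (sigmaStar T ψ) ∧
    (∀ τ, IsStoppingTime T Ω τ → ∀ ω ∈ Ω,
      (τ ω < sigmaStar T ψ ω → ¬ ParetoOptimalAt T Ω ψ (τ ω) ω τ) ∧
      (sigmaStar T ψ ω < τ ω → ¬ OptimalAt T Ω ψ (sigmaStar T ψ ω) ω τ)) ∧
    ∀ τ, IsStoppingTime T Ω τ → (∃ ω ∈ Ω, τ ω ≠ sigmaStar T ψ ω) →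
      ¬ Perfect T Ω ψ τ := by
  have hT' : (0:ℝ) ≤ T := hT.le
  refine ⟨⟨sigmaStar_stopping hT' hΩ hψT hψnn hψc hψa hψh hreach, fun t ht ω hω hadm =>
      ⟨sigmaStar_optimalAt hT' hΩ hψT hψnn hψc hψa hψh hreach ht hω hadm,
       sigmaStar_paretoAt hT' hΩ hψT hψnn hψc hψa hψh hreach ht hω hadm⟩⟩,
    fun τ hτ ω hω =>
      ⟨fun h => not_pareto_of_early hT' hΩ hψT hψnn hψc hψa hψh hreach hτ hω h,
       fun h => not_optimal_of_late hT' hΩ hψT hψnn hψc hψa hψh hreach hτ hω h⟩,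
    ?_⟩
  rintro τ hτ ⟨ω, hω, hne⟩ hperf
  rcases hne.lt_or_gt with h | h
  · -- τ ω < σ* ω : τ is admissible at (τ ω, ω), so Perfect would give Pareto optimality
    have htI : τ ω ∈ Icc 0 T := hτ.1 ω hω
    have hadm : Admissible Ω (τ ω) ω τ := fun ω' hω' =>
      (hτ.2 ω hω (τ ω) htI le_rfl ω' hω'.1 hω'.2).ge
    exact not_pareto_of_early hT' hΩ hψT hψnn hψc hψa hψh hreach hτ hω h
      ((hperf.2 (τ ω) htI ω hω hadm).2)
  · -- σ* ω < τ ω : τ is admissible at (σ* ω, ω)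
    have htI : sigmaStar T ψ ω ∈ Icc 0 T := sigmaStar_mem_Icc hT' (hΩ ω hω) (hψT ω hω)
    have hadm : Admissible Ω (sigmaStar T ψ ω) ω τ := by
      intro ω' hω'
      by_contra hc
      push_neg at hc
      have := hτ.2 ω' hω'.1 (sigmaStar T ψ ω) htI hc.le ω hω
        (fun s hs => (hω'.2 s hs).symm)
      rw [this] at h
      exact absurd hc.le (not_le.mpr (lt_of_lt_of_le h (le_refl _)))
    exact not_optimal_of_late hT' hΩ hψT hψnn hψc hψa hψh hreach hτ hω h
      ((hperf.2 (sigmaStar T ψ ω) htI ω hω hadm).1)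

end AuxLemmas

end SellingRegret

end
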